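/- arXiv:2604.03566 — 2 statements merged into one kernel-verified Lean document; each statement's English description precedes it below -/
import Mathlib

section
/- Let Σ₁, …, Σ_n be symmetric positive definite d×d real matrices and λ₁, …, λ_n real weights with Σ_{k=1}^n λ_k = 1 satisfying the Spectral Dominance of Positive Weights condition. Then for every symmetric positive definite d×d matrix S, the matrix Σ_{k=1}^n λ_k · GM(S^{-1}, Σ_k) is symmetric positive definite. -/
open Matrix BigOperators Finset
open scoped Classical

/-- Unique positive semidefinite square root of a positive semidefinite matrix
(and junk value `0` on other matrices). -/
noncomputable def msqrt {d : ℕ} (M : Matrix (Fin d) (Fin d) ℝ) :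
    Matrix (Fin d) (Fin d) ℝ :=
  if h : M.PosSemidef then
    (h.1.eigenvectorUnitary : Matrix (Fin d) (Fin d) ℝ) *
      diagonal ((↑) ∘ (√·) ∘ h.1.eigenvalues) *
      (star h.1.eigenvectorUnitary : Matrix (Fin d) (Fin d) ℝ) else 0

/-- Smallest eigenvalue of a symmetric matrix (junk value `0` otherwise). -/
noncomputable def lmin {d : ℕ} (M : Matrix (Fin d) (Fin d) ℝ) : ℝ :=
  if h : M.IsHermitian then ⨅ i, h.eigenvalues i else 0

/-- Largest eigenvalue of a symmetric matrix (junk value `0` otherwise). -/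
noncomputable def lmax {d : ℕ} (M : Matrix (Fin d) (Fin d) ℝ) : ℝ :=
  if h : M.IsHermitian then ⨆ i, h.eigenvalues i else 0

/-- Squared Bures–Wasserstein distance. -/
noncomputable def W2sq {d : ℕ} (A B : Matrix (Fin d) (Fin d) ℝ) : ℝ :=
  A.trace + B.trace - 2 * (msqrt (msqrt A * B * msqrt A)).trace

/-- The conditional barycenter objective `F`. -/
noncomputable def Fobj {d n : ℕ} (Sig : Fin n → Matrix (Fin d) (Fin d) ℝ)
    (lam : Fin n → ℝ) (S : Matrix (Fin d) (Fin d) ℝ) : ℝ :=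
  ∑ k, lam k * W2sq S (Sig k)

/-- Geometric mean `GM(S⁻¹, Σ) = S^{-1/2} (S^{1/2} Σ S^{1/2})^{1/2} S^{-1/2}`. -/
noncomputable def GMinv {d : ℕ} (S Sigma : Matrix (Fin d) (Fin d) ℝ) :
    Matrix (Fin d) (Fin d) ℝ :=
  (msqrt S)⁻¹ * msqrt (msqrt S * Sigma * msqrt S) * (msqrt S)⁻¹

/-- The Spectral Dominance of Positive Weights condition. -/
def SDPW {d n : ℕ} (Sig : Fin n → Matrix (Fin d) (Fin d) ℝ) (lam : Fin n → ℝ) : Prop :=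
  ∑ j ∈ Finset.univ.filter (fun k => lam k < 0), (-lam j) * Real.sqrt (lmax (Sig j))
    < ∑ i ∈ Finset.univ.filter (fun k => 0 < lam k), lam i * Real.sqrt (lmin (Sig i))

/-- Square root of a positive semidefinite matrix (port helper). -/
noncomputable def Matrix.PosSemidef.sqrt {d : ℕ} {M : Matrix (Fin d) (Fin d) ℝ}
    (_h : M.PosSemidef) : Matrix (Fin d) (Fin d) ℝ := msqrt M

open scoped MatrixOrder in
lemma Matrix.PosSemidef.sqrt_eq_cfc {d : ℕ} {M : Matrix (Fin d) (Fin d) ℝ}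
    (h : M.PosSemidef) : h.sqrt = CFC.sqrt M := by
  rw [Matrix.PosSemidef.sqrt, msqrt, dif_pos h, CFC.sqrt_eq_cfc, cfc_nnreal_eq_real _ M,
    h.1.cfc_eq, IsHermitian.cfc, Unitary.conjStarAlgAut_apply]
  congr 3
  funext i
  simp [h.eigenvalues_nonneg i]

open scoped MatrixOrder in
lemma Matrix.PosSemidef.posSemidef_sqrt {d : ℕ} {M : Matrix (Fin d) (Fin d) ℝ}
    (h : M.PosSemidef) : h.sqrt.PosSemidef := by
  rw [h.sqrt_eq_cfc]; exact nonneg_iff_posSemidef.mp (CFC.sqrt_nonneg M)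

open scoped MatrixOrder in
lemma Matrix.PosSemidef.sqrt_mul_self {d : ℕ} {M : Matrix (Fin d) (Fin d) ℝ}
    (h : M.PosSemidef) : h.sqrt * h.sqrt = M := by
  rw [h.sqrt_eq_cfc]; exact CFC.sqrt_mul_sqrt_self M (nonneg_iff_posSemidef.mpr h)

open scoped MatrixOrder in
lemma Matrix.PosSemidef.eq_sqrt_of_sq_eq {d : ℕ} {A B : Matrix (Fin d) (Fin d) ℝ}
    (hB : B.PosSemidef) (hA : A.PosSemidef) (h : B ^ 2 = A) : B = hA.sqrt := by
  rw [hA.sqrt_eq_cfc]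
  exact (CFC.sqrt_unique (by rw [← sq]; exact h) (nonneg_iff_posSemidef.mpr hB)).symm

namespace SDPWAux

variable {d : ℕ}

lemma psd_quad {M : Matrix (Fin d) (Fin d) ℝ} (h : M.PosSemidef) (x : Fin d → ℝ) :
    0 ≤ x ⬝ᵥ M *ᵥ x := by
  have := h.dotProduct_mulVec_nonneg x; rwa [star_trivial] at this

lemma psd_smul {M : Matrix (Fin d) (Fin d) ℝ} (hM : M.PosSemidef) {c : ℝ} (hc : 0 ≤ c) :
    (c • M).PosSemidef := by
  refine .of_dotProduct_mulVec_nonneg ?_ fun x => ?_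
  · show (c • M)ᴴ = c • M
    rw [conjTranspose_smul, star_trivial, hM.1.eq]
  · rw [smul_mulVec, dotProduct_smul, smul_eq_mul]
    exact mul_nonneg hc (hM.dotProduct_mulVec_nonneg x)

lemma psd_sub_smul_one {A : Matrix (Fin d) (Fin d) ℝ} (hA : A.IsHermitian) {c : ℝ}
    (h : ∀ i, c ≤ hA.eigenvalues i) :
    (A - c • (1 : Matrix (Fin d) (Fin d) ℝ)).PosSemidef := by
  set U : Matrix (Fin d) (Fin d) ℝ := (hA.eigenvectorUnitary : Matrix (Fin d) (Fin d) ℝ) with hUdef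
  have hU : U * star U = 1 := mem_unitaryGroup_iff.mp hA.eigenvectorUnitary.2
  have hdiag : diagonal ((RCLike.ofReal : ℝ → ℝ) ∘ hA.eigenvalues)
      - c • (1 : Matrix (Fin d) (Fin d) ℝ) = diagonal (fun i => hA.eigenvalues i - c) := by
    rw [smul_one_eq_diagonal, ← diagonal_sub]
    congr 1
  have key : U * diagonal (fun i => hA.eigenvalues i - c) * star U = A - c • 1 := by
    rw [← hdiag, mul_sub, sub_mul, Matrix.mul_smul, mul_one, Matrix.smul_mul, hU]
    conv_rhs => rw [hA.spectral_theorem, Unitary.conjStarAlgAut_apply]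
  rw [← key, Matrix.star_eq_conjTranspose]
  exact (Matrix.PosSemidef.diagonal (by intro i; exact sub_nonneg.2 (h i))).mul_mul_conjTranspose_same U

lemma psd_smul_one_sub {A : Matrix (Fin d) (Fin d) ℝ} (hA : A.IsHermitian) {c : ℝ}
    (h : ∀ i, hA.eigenvalues i ≤ c) :
    (c • (1 : Matrix (Fin d) (Fin d) ℝ) - A).PosSemidef := by
  set U : Matrix (Fin d) (Fin d) ℝ := (hA.eigenvectorUnitary : Matrix (Fin d) (Fin d) ℝ) with hUdef
  have hU : U * star U = 1 := mem_unitaryGroup_iff.mp hA.eigenvectorUnitary.2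
  have hdiag : c • (1 : Matrix (Fin d) (Fin d) ℝ)
      - diagonal ((RCLike.ofReal : ℝ → ℝ) ∘ hA.eigenvalues)
      = diagonal (fun i => c - hA.eigenvalues i) := by
    rw [smul_one_eq_diagonal, ← diagonal_sub]
    congr 1
  have key : U * diagonal (fun i => c - hA.eigenvalues i) * star U = c • 1 - A := by
    rw [← hdiag, mul_sub, sub_mul, Matrix.mul_smul, mul_one, Matrix.smul_mul, hU]
    conv_rhs => rw [hA.spectral_theorem, Unitary.conjStarAlgAut_apply]
  rw [← key, Matrix.star_eq_conjTranspose]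
  exact (Matrix.PosSemidef.diagonal (by intro i; exact sub_nonneg.2 (h i))).mul_mul_conjTranspose_same U

set_option maxHeartbeats 1000000 in
lemma sqrt_mono {A B : Matrix (Fin d) (Fin d) ℝ} (hA : A.PosSemidef) (hB : B.PosSemidef)
    (hAB : (A - B).PosSemidef) : (hA.sqrt - hB.sqrt).PosSemidef := by
  set X := hA.sqrt with hX
  set Y := hB.sqrt with hY
  have hXp : X.PosSemidef := hA.posSemidef_sqrt
  have hYp : Y.PosSemidef := hB.posSemidef_sqrt
  have hXY : (X - Y).IsHermitian := hXp.1.sub hYp.1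
  refine hXY.posSemidef_iff_eigenvalues_nonneg.mpr (Pi.le_def.mpr fun i => ?_)
  set t := hXY.eigenvalues i with ht
  set v : Fin d → ℝ := ⇑(hXY.eigenvectorBasis i) with hv
  have hvne : v ≠ 0 := by
    intro h0
    have hb : hXY.eigenvectorBasis i = 0 := by
      ext j; exact congrFun h0 j
    exact hXY.eigenvectorBasis.toBasis.ne_zero i (by
      rw [OrthonormalBasis.coe_toBasis]; exact hb)
  have heig : (X - Y) *ᵥ v = t • v := hXY.mulVec_eigenvectorBasis i
  have hsq : X * X - Y * Y = A - B := by
    rw [hX, hY, hA.sqrt_mul_self, hB.sqrt_mul_self]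
  have hsymm : (X - Y)ᵀ = X - Y := by
    rw [← conjTranspose_eq_transpose_of_trivial, hXY.eq]
  have hsplit : v ⬝ᵥ (A - B) *ᵥ v = t * (v ⬝ᵥ X *ᵥ v) + t * (v ⬝ᵥ Y *ᵥ v) := by
    have hXYd : X * X - Y * Y = X * (X - Y) + (X - Y) * Y := by noncomm_ring
    rw [← hsq, hXYd, add_mulVec, dotProduct_add]
    congr 1
    · rw [← mulVec_mulVec, heig, mulVec_smul, dotProduct_smul, smul_eq_mul]
    · rw [← mulVec_mulVec, dotProduct_mulVec, ← hsymm, vecMul_transpose, heig,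
        smul_dotProduct, smul_eq_mul]
  have h0 : (0:ℝ) ≤ t * (v ⬝ᵥ X *ᵥ v + v ⬝ᵥ Y *ᵥ v) := by
    have := psd_quad hAB v
    rw [hsplit] at this
    linarith [this]
  have hp : 0 ≤ v ⬝ᵥ X *ᵥ v := psd_quad hXp v
  have hq : 0 ≤ v ⬝ᵥ Y *ᵥ v := psd_quad hYp v
  rcases (add_nonneg hp hq).lt_or_eq with hpq | hpq
  · by_contra hneg
    push_neg at hneg
    exact absurd h0 (not_le.2 (mul_neg_of_neg_of_pos hneg hpq))
  · have hp0 : v ⬝ᵥ X *ᵥ v = 0 := by linarith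
    have hq0 : v ⬝ᵥ Y *ᵥ v = 0 := by linarith
    have hXv : X *ᵥ v = 0 := (hXp.dotProduct_mulVec_zero_iff v).mp (by rwa [star_trivial])
    have hYv : Y *ᵥ v = 0 := (hYp.dotProduct_mulVec_zero_iff v).mp (by rwa [star_trivial])
    have htv : t • v = 0 := by rw [← heig, sub_mulVec, hXv, hYv, sub_zero]
    rcases smul_eq_zero.mp htv with h | h
    · exact h.ge
    · exact absurd h hvne

lemma msqrt_eq {M : Matrix (Fin d) (Fin d) ℝ} (h : M.PosSemidef) : msqrt M = h.sqrt :=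
  rfl

lemma msqrt_psd {M : Matrix (Fin d) (Fin d) ℝ} (h : M.PosSemidef) :
    (msqrt M).PosSemidef := by rw [msqrt_eq h]; exact h.posSemidef_sqrt

lemma msqrt_mul_self {M : Matrix (Fin d) (Fin d) ℝ} (h : M.PosSemidef) :
    msqrt M * msqrt M = M := by rw [msqrt_eq h]; exact h.sqrt_mul_self

lemma msqrt_isHermitian (M : Matrix (Fin d) (Fin d) ℝ) : (msqrt M).IsHermitian := by
  unfold msqrt
  split
  · rename_i h; have := (Matrix.PosSemidef.posSemidef_sqrt h).1
    rwa [Matrix.PosSemidef.sqrt, msqrt, dif_pos h] at this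
  · exact isHermitian_zero

lemma msqrt_smul_sq {R : Matrix (Fin d) (Fin d) ℝ} (hR : R.PosSemidef) {c : ℝ} (hc : 0 ≤ c) :
    msqrt (c • (R * R)) = Real.sqrt c • R := by
  have hRR : (R * R).PosSemidef := by
    have := hR.mul_mul_conjTranspose_same (1 : Matrix (Fin d) (Fin d) ℝ)
    simpa [sq] using hR.pow 2
  have h2 : (c • (R * R)).PosSemidef := psd_smul hRR hc
  have h1 : (Real.sqrt c • R).PosSemidef := psd_smul hR (Real.sqrt_nonneg c)
  have h3 : (Real.sqrt c • R) ^ 2 = c • (R * R) := by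
    rw [sq, Matrix.smul_mul, Matrix.mul_smul, smul_smul, Real.mul_self_sqrt hc]
  rw [msqrt_eq h2, ← h1.eq_sqrt_of_sq_eq h2 h3]

lemma quad_sum {n : ℕ} (A : Fin n → Matrix (Fin d) (Fin d) ℝ) (x : Fin d → ℝ) :
    x ⬝ᵥ (∑ k, A k) *ᵥ x = ∑ k, x ⬝ᵥ A k *ᵥ x := by
  classical
  have h1 : ∀ (s : Finset (Fin n)), x ⬝ᵥ (∑ k ∈ s, A k) *ᵥ x = ∑ k ∈ s, x ⬝ᵥ A k *ᵥ x := by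
    intro s
    induction s using Finset.induction_on with
    | empty => simp
    | insert a s h ih => rw [Finset.sum_insert h, Finset.sum_insert h, add_mulVec, dotProduct_add, ih]
  exact h1 Finset.univ

lemma quad_smul (A : Matrix (Fin d) (Fin d) ℝ) (c : ℝ) (x : Fin d → ℝ) :
    x ⬝ᵥ (c • A) *ᵥ x = c * (x ⬝ᵥ A *ᵥ x) := by
  rw [smul_mulVec, dotProduct_smul, smul_eq_mul]

end SDPWAux

namespace SDPWAux

lemma GM_bound {d : ℕ} {S Sg : Matrix (Fin d) (Fin d) ℝ} (hS : S.PosDef) (hSg : Sg.PosDef)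
    (x : Fin d → ℝ) :
    Real.sqrt (lmin Sg) * ((msqrt S)⁻¹ *ᵥ x ⬝ᵥ msqrt S *ᵥ ((msqrt S)⁻¹ *ᵥ x))
        ≤ x ⬝ᵥ GMinv S Sg *ᵥ x ∧
      x ⬝ᵥ GMinv S Sg *ᵥ x
        ≤ Real.sqrt (lmax Sg) * ((msqrt S)⁻¹ *ᵥ x ⬝ᵥ msqrt S *ᵥ ((msqrt S)⁻¹ *ᵥ x)) := by
  set R := msqrt S with hRdef
  have hRpsd : R.PosSemidef := msqrt_psd hS.posSemidef
  have hRh : Rᴴ = R := hRpsd.1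
  have hRR : R * R = S := msqrt_mul_self hS.posSemidef
  set y := R⁻¹ *ᵥ x with hy
  have hM : (R * Sg * R).PosSemidef := by
    have := hSg.posSemidef.mul_mul_conjTranspose_same R
    rwa [hRh] at this
  set Q := msqrt (R * Sg * R) with hQdef
  have hQpsd : Q.PosSemidef := msqrt_psd hM
  have hlmin : ∀ i, lmin Sg ≤ hSg.1.eigenvalues i := by
    intro i
    rw [lmin, dif_pos hSg.1]
    exact ciInf_le (Set.Finite.bddBelow (Set.finite_range _)) i
  have hlmax : ∀ i, hSg.1.eigenvalues i ≤ lmax Sg := by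
    intro i
    rw [lmax, dif_pos hSg.1]
    exact le_ciSup (Set.Finite.bddAbove (Set.finite_range _)) i
  have ha0 : 0 ≤ lmin Sg := by
    rw [lmin, dif_pos hSg.1]
    exact Real.iInf_nonneg fun i => (hSg.eigenvalues_pos i).le
  have hb0 : 0 ≤ lmax Sg := by
    rw [lmax, dif_pos hSg.1]
    exact Real.iSup_nonneg fun i => (hSg.eigenvalues_pos i).le
  have hconj : ∀ c : ℝ, R * (c • (1 : Matrix (Fin d) (Fin d) ℝ)) * R = c • S := by
    intro c
    rw [Matrix.mul_smul, mul_one, Matrix.smul_mul, hRR]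
  have hlow : (R * Sg * R - lmin Sg • S).PosSemidef := by
    have h1 := (psd_sub_smul_one hSg.1 hlmin).mul_mul_conjTranspose_same R
    rw [hRh] at h1
    have h2 : R * (Sg - lmin Sg • 1) * R = R * Sg * R - lmin Sg • S := by
      rw [mul_sub, sub_mul, hconj]
    rwa [h2] at h1
  have hupp : (lmax Sg • S - R * Sg * R).PosSemidef := by
    have h1 := (psd_smul_one_sub hSg.1 hlmax).mul_mul_conjTranspose_same R
    rw [hRh] at h1
    have h2 : R * (lmax Sg • 1 - Sg) * R = lmax Sg • S - R * Sg * R := by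
      rw [mul_sub, sub_mul, hconj]
    rwa [h2] at h1
  have haS : (lmin Sg • S).PosSemidef := psd_smul hS.posSemidef ha0
  have hbS : (lmax Sg • S).PosSemidef := psd_smul hS.posSemidef hb0
  have hsa : msqrt (lmin Sg • S) = Real.sqrt (lmin Sg) • R := by
    rw [show lmin Sg • S = lmin Sg • (R * R) by rw [hRR]]
    exact msqrt_smul_sq hRpsd ha0
  have hsb : msqrt (lmax Sg • S) = Real.sqrt (lmax Sg) • R := by
    rw [show lmax Sg • S = lmax Sg • (R * R) by rw [hRR]]
    exact msqrt_smul_sq hRpsd hb0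
  have h1 : (Q - Real.sqrt (lmin Sg) • R).PosSemidef := by
    have := sqrt_mono hM haS hlow
    rwa [← msqrt_eq hM, ← msqrt_eq haS, hsa, ← hQdef] at this
  have h2 : (Real.sqrt (lmax Sg) • R - Q).PosSemidef := by
    have := sqrt_mono hbS hM hupp
    rwa [← msqrt_eq hM, ← msqrt_eq hbS, hsb, ← hQdef] at this
  have hRT : Rᵀ = R := by rw [← conjTranspose_eq_transpose_of_trivial, hRh]
  have hRinvT : R⁻¹ᵀ = R⁻¹ := by rw [Matrix.transpose_nonsing_inv, hRT]
  have hxv : x ᵥ* R⁻¹ = y := by rw [← hRinvT, vecMul_transpose]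
  have hquad : x ⬝ᵥ GMinv S Sg *ᵥ x = y ⬝ᵥ Q *ᵥ y := by
    have : GMinv S Sg = R⁻¹ * Q * R⁻¹ := rfl
    rw [this, ← mulVec_mulVec, ← mulVec_mulVec, dotProduct_mulVec, hxv]
  have hl := psd_quad h1 y
  have hu := psd_quad h2 y
  rw [sub_mulVec, dotProduct_sub, smul_mulVec, dotProduct_smul, smul_eq_mul] at hl hu
  constructor
  · rw [hquad]; linarith
  · rw [hquad]; linarith

end SDPWAux

/-- under Spectral Dominance, `∑ₖ λₖ GM(S⁻¹, Σₖ)` is positive definite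
for every positive definite `S`. -/
theorem stmt10 {d n : ℕ} (Sig : Fin n → Matrix (Fin d) (Fin d) ℝ)
    (lam : Fin n → ℝ) (hSig : ∀ k, (Sig k).PosDef) (hsum : ∑ k, lam k = 1)
    (hSD : SDPW Sig lam)
    (S : Matrix (Fin d) (Fin d) ℝ) (hS : S.PosDef) :
    (∑ k, lam k • GMinv S (Sig k)).PosDef := by
  have hRpsd : (msqrt S).PosSemidef := SDPWAux.msqrt_psd hS.posSemidef
  have hRR : msqrt S * msqrt S = S := SDPWAux.msqrt_mul_self hS.posSemidef
  have hdetR : IsUnit (msqrt S).det := by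
    have hdet : (msqrt S).det * (msqrt S).det = S.det := by rw [← Matrix.det_mul, hRR]
    refine isUnit_iff_ne_zero.mpr fun h0 => ?_
    rw [h0, mul_zero] at hdet
    exact absurd hdet.symm (ne_of_gt hS.det_pos)
  refine Matrix.PosDef.of_dotProduct_mulVec_pos ?_ ?_
  · -- Hermitian
    show (∑ k, lam k • GMinv S (Sig k))ᴴ = _
    rw [Matrix.conjTranspose_sum]
    refine Finset.sum_congr rfl fun k _ => ?_
    rw [Matrix.conjTranspose_smul, star_trivial]
    congr 1
    show ((msqrt S)⁻¹ * msqrt (msqrt S * Sig k * msqrt S) * (msqrt S)⁻¹)ᴴ = GMinv S (Sig k)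
    rw [Matrix.conjTranspose_mul, Matrix.conjTranspose_mul,
      (hRpsd.1.inv).eq, (SDPWAux.msqrt_isHermitian (msqrt S * Sig k * msqrt S)).eq,
      ← mul_assoc]
    rfl
  · -- positivity
    intro x hx
    rw [star_trivial]
    have hRy : msqrt S *ᵥ ((msqrt S)⁻¹ *ᵥ x) = x := by
      rw [mulVec_mulVec, Matrix.mul_nonsing_inv _ hdetR, one_mulVec]
    set y := (msqrt S)⁻¹ *ᵥ x with hy
    have hc : 0 < y ⬝ᵥ msqrt S *ᵥ y := by
      rcases (SDPWAux.psd_quad hRpsd y).lt_or_eq with h | h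
      · exact h
      · exfalso
        have h0 : msqrt S *ᵥ y = 0 :=
          (hRpsd.dotProduct_mulVec_zero_iff y).mp (by rw [star_trivial]; exact h.symm)
        rw [h0] at hRy
        exact hx hRy.symm
    set c := y ⬝ᵥ msqrt S *ᵥ y with hcdef
    set g : Fin n → ℝ := fun k =>
      if 0 < lam k then Real.sqrt (lmin (Sig k)) else Real.sqrt (lmax (Sig k)) with hg
    have hterm : ∀ k, lam k * (g k * c) ≤ lam k * (x ⬝ᵥ GMinv S (Sig k) *ᵥ x) := by
      intro k
      obtain ⟨hlo, hhi⟩ := SDPWAux.GM_bound hS (hSig k) x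
      rcases lt_trichotomy (lam k) 0 with hk | hk | hk
      · simp only [hg]
        rw [if_neg (not_lt.2 hk.le)]
        exact mul_le_mul_of_nonpos_left hhi hk.le
      · rw [hk, zero_mul, zero_mul]
      · simp only [hg]
        rw [if_pos hk]
        exact mul_le_mul_of_nonneg_left hlo hk.le
    have hquadsum : x ⬝ᵥ (∑ k, lam k • GMinv S (Sig k)) *ᵥ x
        = ∑ k, lam k * (x ⬝ᵥ GMinv S (Sig k) *ᵥ x) := by
      rw [SDPWAux.quad_sum]
      exact Finset.sum_congr rfl fun k _ => SDPWAux.quad_smul _ _ _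
    have hsum1 : ∑ k, lam k * (g k * c) ≤ ∑ k, lam k * (x ⬝ᵥ GMinv S (Sig k) *ᵥ x) :=
      Finset.sum_le_sum fun k _ => hterm k
    -- the coefficient sum is positive
    have e1 : ∑ k ∈ Finset.univ.filter (fun k => 0 < lam k), lam k * g k
        = ∑ i ∈ Finset.univ.filter (fun k => 0 < lam k), lam i * Real.sqrt (lmin (Sig i)) := by
      refine Finset.sum_congr rfl fun k hk => ?_
      have := (Finset.mem_filter.mp hk).2
      simp only [hg]
      rw [if_pos this]
    have efil : (Finset.univ.filter (fun k => ¬ 0 < lam k)).filter (fun k => lam k < 0)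
        = Finset.univ.filter (fun k => lam k < 0) := by
      rw [Finset.filter_filter]
      refine Finset.filter_congr fun k _ => ?_
      constructor
      · exact fun h => h.2
      · exact fun h => ⟨not_lt.2 h.le, h⟩
    have e2 : ∑ k ∈ (Finset.univ.filter (fun k => ¬ 0 < lam k)).filter (fun k => lam k < 0),
          lam k * g k
        = - ∑ j ∈ Finset.univ.filter (fun k => lam k < 0),
            (-lam j) * Real.sqrt (lmax (Sig j)) := by
      rw [efil, ← Finset.sum_neg_distrib]
      refine Finset.sum_congr rfl fun k hk => ?_
      have hkneg := (Finset.mem_filter.mp hk).2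
      simp only [hg]
      rw [if_neg (not_lt.2 hkneg.le)]
      ring
    have e3 : ∑ k ∈ (Finset.univ.filter (fun k => ¬ 0 < lam k)).filter (fun k => ¬ lam k < 0),
        lam k * g k = 0 := by
      refine Finset.sum_eq_zero fun k hk => ?_
      have h1 := (Finset.mem_filter.mp hk).2
      have h2 := (Finset.mem_filter.mp (Finset.mem_filter.mp hk).1).2
      have : lam k = 0 := le_antisymm (not_lt.1 h2) (not_lt.1 h1)
      rw [this, zero_mul]
    have key : 0 < ∑ k, lam k * g k := by
      rw [← Finset.sum_filter_add_sum_filter_not Finset.univ (fun k => 0 < lam k)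
          (fun k => lam k * g k),
        ← Finset.sum_filter_add_sum_filter_not (Finset.univ.filter (fun k => ¬ 0 < lam k))
          (fun k => lam k < 0) (fun k => lam k * g k), e1, e2, e3]
      have := hSD
      rw [SDPW] at this
      linarith
    have hfold : (∑ k, lam k * g k) * c = ∑ k, lam k * (g k * c) := by
      rw [Finset.sum_mul]
      exact Finset.sum_congr rfl fun k _ => mul_assoc _ _ _
    rw [hquadsum]
    calc (0:ℝ) < (∑ k, lam k * g k) * c := mul_pos key hc
      _ = ∑ k, lam k * (g k * c) := hfold
      _ ≤ _ := hsum1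
end

section
/- Let Σ₁, …, Σ_n be symmetric positive definite d×d real matrices and λ₁, …, λ_n real weights with Σ_{k=1}^n λ_k = 1 satisfying the Spectral Dominance of Positive Weights condition, and set Δ = Σ_{i∈I} λ_i⁺ √λ_min(Σ_i) − Σ_{j∈J} λ_j⁻ √λ_max(Σ_j) > 0. Then for every symmetric positive definite d×d matrix S, Σ_{k=1}^n λ_k (S^{1/2} Σ_k S^{1/2})^{1/2} ⪰ Δ · S^{1/2} in the Löwner order; in particular, Σ_{k=1}^n λ_k (S^{1/2} Σ_k S^{1/2})^{1/2} is positive definite. -/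
open Matrix BigOperators Finset
open scoped Classical

section helpers
variable {d : ℕ}

lemma psd_smul {c : ℝ} {A : Matrix (Fin d) (Fin d) ℝ} (hc : 0 ≤ c) (hA : A.PosSemidef) :
    (c • A).PosSemidef := by
  refine Matrix.PosSemidef.of_dotProduct_mulVec_nonneg ?_ fun x => ?_
  · unfold Matrix.IsHermitian
    rw [Matrix.conjTranspose_smul, hA.1]
    simp
  · rw [Matrix.smul_mulVec, dotProduct_smul]
    exact mul_nonneg hc (hA.dotProduct_mulVec_nonneg x)

lemma pd_smul {c : ℝ} {A : Matrix (Fin d) (Fin d) ℝ} (hc : 0 < c) (hA : A.PosDef) :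
    (c • A).PosDef := by
  refine Matrix.PosDef.of_dotProduct_mulVec_pos ?_ fun x hx => ?_
  · unfold Matrix.IsHermitian
    rw [Matrix.conjTranspose_smul, hA.1]
    simp
  · rw [Matrix.smul_mulVec, dotProduct_smul]
    exact mul_pos hc (hA.dotProduct_mulVec_pos hx)

lemma psd_of_sq_psd {A B : Matrix (Fin d) (Fin d) ℝ} (hA : A.PosSemidef) (hB : B.PosSemidef)
    (h : (B * B - A * A).PosSemidef) : (B - A).PosSemidef := by
  have hC : (B - A).IsHermitian := hB.1.sub hA.1
  refine hC.posSemidef_iff_eigenvalues_nonneg.mpr fun i => (?_ : (0 : ℝ) ≤ _)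
  set μ := hC.eigenvalues i with hμ
  set v : Fin d → ℝ := ⇑(hC.eigenvectorBasis i) with hvdef
  have hv : (B - A) *ᵥ v = μ • v := hC.mulVec_eigenvectorBasis i
  have hvne : v ≠ 0 := fun h0 => hC.eigenvectorBasis.orthonormal.ne_zero i
    (by rw [hvdef] at h0; simpa using congrArg (WithLp.toLp 2) h0)
  have hCT : (B - A)ᵀ = B - A := by
    have := hC
    unfold Matrix.IsHermitian at this
    simpa using this
  set q := v ⬝ᵥ ((A + B) *ᵥ v) with hq
  have hqA : 0 ≤ v ⬝ᵥ (A *ᵥ v) := by simpa using hA.dotProduct_mulVec_nonneg v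
  have hqB : 0 ≤ v ⬝ᵥ (B *ᵥ v) := by simpa using hB.dotProduct_mulVec_nonneg v
  have hq0 : 0 ≤ q := by
    rw [hq, Matrix.add_mulVec, dotProduct_add]; exact add_nonneg hqA hqB
  have h2 : (A + B) * (B - A) + (B - A) * (A + B) = (B * B - A * A) + (B * B - A * A) := by
    noncomm_ring
  have hsym : v ⬝ᵥ ((B - A) *ᵥ ((A + B) *ᵥ v)) = μ * q := by
    rw [Matrix.dotProduct_mulVec]
    have : v ᵥ* (B - A) = μ • v := by
      rw [← Matrix.mulVec_transpose, hCT, hv]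
    rw [this, smul_dotProduct]
    rfl
  have hfirst : v ⬝ᵥ ((A + B) *ᵥ ((B - A) *ᵥ v)) = μ * q := by
    rw [hv, Matrix.mulVec_smul, dotProduct_smul]
    rfl
  have hkey : 0 ≤ μ * q := by
    have hpsd := h.dotProduct_mulVec_nonneg v
    simp only [star_trivial] at hpsd
    have : v ⬝ᵥ (((A + B) * (B - A) + (B - A) * (A + B)) *ᵥ v)
        = (v ⬝ᵥ ((B * B - A * A) *ᵥ v)) + (v ⬝ᵥ ((B * B - A * A) *ᵥ v)) := by
      rw [h2, Matrix.add_mulVec, dotProduct_add]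
    rw [Matrix.add_mulVec, dotProduct_add, ← Matrix.mulVec_mulVec,
      ← Matrix.mulVec_mulVec, hfirst, hsym] at this
    nlinarith
  rcases hq0.lt_or_eq with hqpos | hqzero
  · nlinarith
  · have hqA' : v ⬝ᵥ (A *ᵥ v) = 0 := by
      rw [hq, Matrix.add_mulVec, dotProduct_add] at hqzero
      linarith
    have hqB' : v ⬝ᵥ (B *ᵥ v) = 0 := by
      rw [hq, Matrix.add_mulVec, dotProduct_add] at hqzero
      linarith
    have hAv : A *ᵥ v = 0 := by
      have := (hA.dotProduct_mulVec_zero_iff v).mp (by simpa using hqA')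
      exact this
    have hBv : B *ᵥ v = 0 := by
      have := (hB.dotProduct_mulVec_zero_iff v).mp (by simpa using hqB')
      exact this
    have : μ • v = 0 := by
      rw [← hv, Matrix.sub_mulVec, hAv, hBv, sub_zero]
    rcases smul_eq_zero.mp this with h0 | h0
    · exact le_of_eq h0.symm
    · exact absurd h0 hvne

lemma lmin_nonneg {M : Matrix (Fin d) (Fin d) ℝ} (hM : M.PosSemidef) : 0 ≤ lmin M := by
  rw [lmin, dif_pos hM.1]
  exact Real.iInf_nonneg hM.eigenvalues_nonneg

lemma lmax_nonneg {M : Matrix (Fin d) (Fin d) ℝ} (hM : M.PosSemidef) : 0 ≤ lmax M := by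
  rw [lmax, dif_pos hM.1]
  rcases isEmpty_or_nonempty (Fin d) with h | h
  · simp [Real.iSup_of_isEmpty]
  · exact le_ciSup_of_le (Set.Finite.bddAbove (Set.finite_range _)) (Classical.arbitrary _)
      (hM.eigenvalues_nonneg _)

lemma spectral_conj {M : Matrix (Fin d) (Fin d) ℝ} (hM : M.IsHermitian) (c : ℝ) :
    M - c • 1 = (hM.eigenvectorUnitary : Matrix (Fin d) (Fin d) ℝ) *
      Matrix.diagonal (fun i => hM.eigenvalues i - c) *
      (hM.eigenvectorUnitary : Matrix (Fin d) (Fin d) ℝ)ᴴ := by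
  have hU : (hM.eigenvectorUnitary : Matrix (Fin d) (Fin d) ℝ) *
      star (hM.eigenvectorUnitary : Matrix (Fin d) (Fin d) ℝ) = 1 :=
    (Matrix.mem_unitaryGroup_iff).mp hM.eigenvectorUnitary.2
  have hdiag : Matrix.diagonal (fun i => hM.eigenvalues i - c)
      = Matrix.diagonal (RCLike.ofReal ∘ hM.eigenvalues) - c • (1 : Matrix (Fin d) (Fin d) ℝ) := by
    ext i j
    rcases eq_or_ne i j with rfl | hij
    · simp [Matrix.diagonal_apply_eq, Matrix.one_apply_eq, Function.comp]
    · simp [Matrix.diagonal_apply_ne _ hij, Matrix.one_apply_ne hij]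
  rw [hdiag, Matrix.mul_sub, Matrix.sub_mul]
  have h1 : (hM.eigenvectorUnitary : Matrix (Fin d) (Fin d) ℝ) *
      (c • (1 : Matrix (Fin d) (Fin d) ℝ)) *
      (hM.eigenvectorUnitary : Matrix (Fin d) (Fin d) ℝ)ᴴ = c • 1 := by
    rw [Matrix.mul_smul, Matrix.mul_one, Matrix.smul_mul]
    show c • ((hM.eigenvectorUnitary : Matrix (Fin d) (Fin d) ℝ) *
      star (hM.eigenvectorUnitary : Matrix (Fin d) (Fin d) ℝ)) = c • 1
    rw [hU]
  rw [h1]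
  have hst := hM.spectral_theorem
  rw [Unitary.conjStarAlgAut_apply, Matrix.star_eq_conjTranspose] at hst
  rw [← hst]

lemma sub_lmin_psd {M : Matrix (Fin d) (Fin d) ℝ} (hM : M.IsHermitian) :
    (M - lmin M • 1).PosSemidef := by
  rw [spectral_conj hM (lmin M)]
  apply Matrix.PosSemidef.mul_mul_conjTranspose_same
  rw [Matrix.posSemidef_diagonal_iff]
  intro i
  have h1 : lmin M = ⨅ j, hM.eigenvalues j := dif_pos hM
  have h2 : (⨅ j, hM.eigenvalues j) ≤ hM.eigenvalues i :=
    ciInf_le (Set.Finite.bddBelow (Set.finite_range _)) i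
  rw [h1]
  simp only [sub_nonneg]
  exact h2

lemma lmax_sub_psd {M : Matrix (Fin d) (Fin d) ℝ} (hM : M.IsHermitian) :
    (lmax M • 1 - M).PosSemidef := by
  have h : lmax M • (1 : Matrix (Fin d) (Fin d) ℝ) - M = -(M - lmax M • 1) := by
    rw [neg_sub]
  rw [h, spectral_conj hM (lmax M)]
  have : -((hM.eigenvectorUnitary : Matrix (Fin d) (Fin d) ℝ) *
      Matrix.diagonal (fun i => hM.eigenvalues i - lmax M) *
      (hM.eigenvectorUnitary : Matrix (Fin d) (Fin d) ℝ)ᴴ)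
      = (hM.eigenvectorUnitary : Matrix (Fin d) (Fin d) ℝ) *
      Matrix.diagonal (fun i => lmax M - hM.eigenvalues i) *
      (hM.eigenvectorUnitary : Matrix (Fin d) (Fin d) ℝ)ᴴ := by
    have hd : (Matrix.diagonal fun i => lmax M - hM.eigenvalues i)
        = -(Matrix.diagonal fun i => hM.eigenvalues i - lmax M) := by
      ext i j
      rcases eq_or_ne i j with rfl | hij
      · simp [neg_sub]
      · simp [Matrix.diagonal_apply_ne _ hij]
    rw [hd, Matrix.mul_neg, Matrix.neg_mul]
  rw [this]
  apply Matrix.PosSemidef.mul_mul_conjTranspose_same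
  rw [Matrix.posSemidef_diagonal_iff]
  intro i
  have h1 : lmax M = ⨆ j, hM.eigenvalues j := dif_pos hM
  have h2 : hM.eigenvalues i ≤ ⨆ j, hM.eigenvalues j :=
    le_ciSup (Set.Finite.bddAbove (Set.finite_range _)) i
  rw [h1]
  simp only [sub_nonneg]
  exact h2

lemma pd_of_sq_pd {B : Matrix (Fin d) (Fin d) ℝ} (hB : B.PosSemidef)
    (h : (B * B).PosDef) : B.PosDef := by
  refine Matrix.PosDef.of_dotProduct_mulVec_pos hB.1 fun x hx => ?_
  rcases (hB.dotProduct_mulVec_nonneg x).lt_or_eq with h1 | h1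
  · exact h1
  · exfalso
    have hBv : B *ᵥ x = 0 := (hB.dotProduct_mulVec_zero_iff x).mp h1.symm
    have h2 := h.dotProduct_mulVec_pos hx
    rw [← Matrix.mulVec_mulVec, hBv, Matrix.mulVec_zero, dotProduct_zero] at h2
    exact lt_irrefl 0 h2

lemma msqrt_spec {M : Matrix (Fin d) (Fin d) ℝ} (hM : M.PosSemidef) :
    (msqrt M).PosSemidef ∧ msqrt M * msqrt M = M := by
  rw [msqrt, dif_pos hM]
  have hU : star (hM.1.eigenvectorUnitary : Matrix (Fin d) (Fin d) ℝ) *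
      (hM.1.eigenvectorUnitary : Matrix (Fin d) (Fin d) ℝ) = 1 :=
    Unitary.coe_star_mul_self _
  have hst := hM.1.spectral_theorem
  rw [Unitary.conjStarAlgAut_apply] at hst
  constructor
  · rw [Matrix.star_eq_conjTranspose]
    apply Matrix.PosSemidef.mul_mul_conjTranspose_same
    apply Matrix.PosSemidef.diagonal
    intro i
    simp [Real.sqrt_nonneg]
  · conv_rhs => rw [hst]
    simp only [Matrix.mul_assoc]
    rw [← Matrix.mul_assoc (star (hM.1.eigenvectorUnitary : Matrix (Fin d) (Fin d) ℝ)), hU,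
      Matrix.one_mul, ← Matrix.mul_assoc (diagonal _), Matrix.diagonal_mul_diagonal]
    congr 3
    funext i
    simp [Real.mul_self_sqrt (hM.eigenvalues_nonneg i)]

end helpers

/-- under Spectral Dominance,
`∑ₖ λₖ (S^(1/2) Σₖ S^(1/2))^(1/2) ⪰ Δ • S^(1/2)`, in particular it is positive definite. -/
theorem stmt11 {d n : ℕ} (Sig : Fin n → Matrix (Fin d) (Fin d) ℝ)
    (lam : Fin n → ℝ) (hSig : ∀ k, (Sig k).PosDef) (hsum : ∑ k, lam k = 1)
    (hSD : SDPW Sig lam)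
    (Delta : ℝ)
    (hDelta : Delta = (∑ i ∈ Finset.univ.filter (fun k => 0 < lam k), lam i * Real.sqrt (lmin (Sig i)))
        - ∑ j ∈ Finset.univ.filter (fun k => lam k < 0), (-lam j) * Real.sqrt (lmax (Sig j)))
    (S : Matrix (Fin d) (Fin d) ℝ) (hS : S.PosDef) :
    ((∑ k, lam k • msqrt (msqrt S * Sig k * msqrt S)) - Delta • msqrt S).PosSemidef ∧
    (∑ k, lam k • msqrt (msqrt S * Sig k * msqrt S)).PosDef := by
  classical
  have hSpsd := hS.posSemidef
  set A := msqrt S with hAdef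
  have hApsd : A.PosSemidef := (msqrt_spec hSpsd).1
  have hAA : A * A = S := (msqrt_spec hSpsd).2
  have hApd : A.PosDef := pd_of_sq_pd hApsd (by rw [hAA]; exact hS)
  have hMk : ∀ k, (A * Sig k * A).PosSemidef := by
    intro k
    have h := ((hSig k).posSemidef).mul_mul_conjTranspose_same A
    rwa [hApsd.1] at h
  set X : Fin n → Matrix (Fin d) (Fin d) ℝ := fun k => msqrt (A * Sig k * A) with hXdef
  have hXpsd : ∀ k, (X k).PosSemidef := fun k => (msqrt_spec (hMk k)).1
  have hXX : ∀ k, X k * X k = A * Sig k * A := fun k => (msqrt_spec (hMk k)).2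
  have hconj : ∀ k (c : ℝ), A * Sig k * A - c • S = A * (Sig k - c • 1) * A := by
    intro k c
    rw [Matrix.mul_sub, Matrix.sub_mul, ← hAA]
    congr 1
    rw [Matrix.mul_smul, Matrix.smul_mul, Matrix.mul_one]
  have hsmulsq : ∀ (c : ℝ), 0 ≤ c →
      (Real.sqrt c • A) * (Real.sqrt c • A) = c • S := by
    intro c hc
    rw [Matrix.smul_mul, Matrix.mul_smul, smul_smul, Real.mul_self_sqrt hc, hAA]
  have hlow : ∀ k, (X k - Real.sqrt (lmin (Sig k)) • A).PosSemidef := by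
    intro k
    apply psd_of_sq_psd (psd_smul (Real.sqrt_nonneg _) hApsd) (hXpsd k)
    rw [hXX k, hsmulsq _ (lmin_nonneg (hSig k).posSemidef), hconj k]
    have h3 := (sub_lmin_psd (hSig k).1).mul_mul_conjTranspose_same A
    rwa [hApsd.1] at h3
  have hup : ∀ k, (Real.sqrt (lmax (Sig k)) • A - X k).PosSemidef := by
    intro k
    apply psd_of_sq_psd (hXpsd k) (psd_smul (Real.sqrt_nonneg _) hApsd)
    rw [hXX k, hsmulsq _ (lmax_nonneg (hSig k).posSemidef)]
    have heq : lmax (Sig k) • S - A * Sig k * A = A * (lmax (Sig k) • 1 - Sig k) * A := by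
      have := hconj k (lmax (Sig k))
      have h2 : A * (lmax (Sig k) • 1 - Sig k) * A = -(A * (Sig k - lmax (Sig k) • 1) * A) := by
        rw [← neg_sub (Sig k), Matrix.mul_neg, Matrix.neg_mul]
      rw [h2, ← this, neg_sub]
    rw [heq]
    have h3 := (lmax_sub_psd (hSig k).1).mul_mul_conjTranspose_same A
    rwa [hApsd.1] at h3
  set w : Fin n → ℝ := fun k =>
    if 0 < lam k then Real.sqrt (lmin (Sig k))
    else if lam k < 0 then Real.sqrt (lmax (Sig k)) else 0 with hwdef
  have hPk : ∀ k, (lam k • X k - (lam k * w k) • A).PosSemidef := by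
    intro k
    rcases lt_trichotomy (lam k) 0 with h | h | h
    · have hwk : w k = Real.sqrt (lmax (Sig k)) := by
        simp [hwdef, h, not_lt.mpr h.le]
      have heq : lam k • X k - (lam k * w k) • A
          = (-lam k) • (Real.sqrt (lmax (Sig k)) • A - X k) := by
        rw [hwk]; module
      rw [heq]
      exact psd_smul (by linarith) (hup k)
    · have : lam k • X k - (lam k * w k) • A = 0 := by
        rw [h]; simp
      rw [this]; exact Matrix.PosSemidef.zero
    · have hwk : w k = Real.sqrt (lmin (Sig k)) := by simp [hwdef, h]
      have heq : lam k • X k - (lam k * w k) • A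
          = lam k • (X k - Real.sqrt (lmin (Sig k)) • A) := by
        rw [hwk]; module
      rw [heq]
      exact psd_smul h.le (hlow k)
  have hwsum : ∑ k, lam k * w k = Delta := by
    have hsplit := Finset.sum_filter_add_sum_filter_not Finset.univ
      (fun k => 0 < lam k) (fun k => lam k * w k)
    have h1 : ∑ k ∈ Finset.univ.filter (fun k => 0 < lam k), lam k * w k
        = ∑ i ∈ Finset.univ.filter (fun k => 0 < lam k), lam i * Real.sqrt (lmin (Sig i)) := by
      refine Finset.sum_congr rfl fun k hk => ?_
      rw [Finset.mem_filter] at hk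
      simp [hwdef, hk.2]
    have hsub : Finset.univ.filter (fun k => lam k < 0)
        ⊆ Finset.univ.filter (fun k => ¬ 0 < lam k) := by
      intro k hk
      rw [Finset.mem_filter] at hk ⊢
      exact ⟨hk.1, not_lt.mpr hk.2.le⟩
    have h2a : ∑ k ∈ Finset.univ.filter (fun k => lam k < 0), lam k * w k
        = ∑ k ∈ Finset.univ.filter (fun k => ¬ 0 < lam k), lam k * w k := by
      refine Finset.sum_subset hsub fun k hk hk2 => ?_
      rw [Finset.mem_filter] at hk hk2
      have : lam k = 0 := by
        push_neg at hk2
        have := hk2 hk.1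
        have h3 := hk.2
        push_neg at h3
        linarith [not_lt.mp hk.2]
      rw [this, zero_mul]
    have h2b : ∑ k ∈ Finset.univ.filter (fun k => lam k < 0), lam k * w k
        = -∑ j ∈ Finset.univ.filter (fun k => lam k < 0), (-lam j) * Real.sqrt (lmax (Sig j)) := by
      rw [← Finset.sum_neg_distrib]
      refine Finset.sum_congr rfl fun k hk => ?_
      rw [Finset.mem_filter] at hk
      have hwk : w k = Real.sqrt (lmax (Sig k)) := by
        simp [hwdef, hk.2, not_lt.mpr hk.2.le]
      rw [hwk]
      ring
    rw [← hsplit, h1, ← h2a, h2b, hDelta]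
    ring
  have hT : ((∑ k, lam k • X k) - Delta • A).PosSemidef := by
    have heq : (∑ k, lam k • X k) - Delta • A
        = ∑ k, (lam k • X k - (lam k * w k) • A) := by
      rw [Finset.sum_sub_distrib, ← Finset.sum_smul, hwsum]
    rw [heq]
    exact Finset.sum_induction _ _ (fun a b ha hb => ha.add hb)
      Matrix.PosSemidef.zero (fun k _ => hPk k)
  refine ⟨hT, ?_⟩
  have hDpos : 0 < Delta := by rw [hDelta]; exact sub_pos.mpr hSD
  have heq : (∑ k, lam k • X k)
      = ((∑ k, lam k • X k) - Delta • A) + Delta • A := by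
    rw [sub_add_cancel]
  rw [heq]
  exact Matrix.PosDef.posSemidef_add hT (pd_smul hDpos hApd)
end
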